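/- Let L be a real symmetric positive semi-definite N×N matrix (a weighted graph Laplacian) and A a real diagonal N×N matrix with positive diagonal entries. Let μ ∈ ℂ and w₁ ∈ ℂ^N, w₁ ≠ 0, satisfy μ²w₁ + μAw₁ + Lw₁ = 0. Then Re(μ) ≤ 0. -/

import Mathlib

open Matrix Complex

theorem quadratic_eigenvalue_nonpositive_re
    (N : ℕ) (L : Matrix (Fin N) (Fin N) ℝ) (hL : L.PosSemidef)
    (a : Fin N → ℝ) (ha : ∀ i, 0 < a i)
    (μ : ℂ) (w : Fin N → ℂ) (hw : w ≠ 0)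
    (heq : ∀ i, μ ^ 2 * w i + μ * (a i : ℂ) * w i
      + ((L.map (algebraMap ℝ ℂ)) *ᵥ w) i = 0) :
    μ.re ≤ 0 := by
  classical
  set u : Fin N → ℝ := fun i => (w i).re with hu
  set v : Fin N → ℝ := fun i => (w i).im with hv
  set c : ℂ := ∑ i, (starRingEnd ℂ) (w i) * w i with hc
  set s : ℂ := ∑ i, (a i : ℂ) * ((starRingEnd ℂ) (w i) * w i) with hs
  set q : ℂ := ∑ i, (starRingEnd ℂ) (w i) * ((L.map (algebraMap ℝ ℂ)) *ᵥ w) i with hq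
  have hsum : μ ^ 2 * c + μ * s + q = 0 := by
    rw [hc, hs, hq, Finset.mul_sum, Finset.mul_sum, ← Finset.sum_add_distrib,
      ← Finset.sum_add_distrib]
    refine Finset.sum_eq_zero fun i _ => ?_
    linear_combination (starRingEnd ℂ) (w i) * heq i
  -- components of c
  have hc_im : c.im = 0 := by
    rw [hc, Complex.im_sum]
    refine Finset.sum_eq_zero fun i _ => ?_
    simp [Complex.mul_im]
    ring
  have hc_re : c.re = ∑ i, (u i ^ 2 + v i ^ 2) := by
    rw [hc, Complex.re_sum]
    refine Finset.sum_congr rfl fun i _ => ?_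
    simp [Complex.mul_re, hu, hv]
    ring
  obtain ⟨i0, hi0⟩ : ∃ i, w i ≠ 0 := Function.ne_iff.mp hw
  have hwi0 : 0 < u i0 ^ 2 + v i0 ^ 2 := by
    rcases Complex.ext_iff.not.mp hi0 with h
    push_neg at h
    rcases eq_or_ne (u i0) 0 with h1 | h1
    · have h2 : v i0 ≠ 0 := by
        intro h2; exact hi0 (Complex.ext h1 h2)
      positivity
    · positivity
  have hC : 0 < c.re := by
    rw [hc_re]
    refine Finset.sum_pos' (fun i _ => by positivity) ⟨i0, Finset.mem_univ _, hwi0⟩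
  -- components of s
  have hs_im : s.im = 0 := by
    rw [hs, Complex.im_sum]
    refine Finset.sum_eq_zero fun i _ => ?_
    simp only [Complex.mul_im, Complex.mul_re, Complex.ofReal_re, Complex.ofReal_im,
      Complex.conj_re, Complex.conj_im]
    ring
  have hs_re : s.re = ∑ i, a i * (u i ^ 2 + v i ^ 2) := by
    rw [hs, Complex.re_sum]
    refine Finset.sum_congr rfl fun i _ => ?_
    simp only [Complex.mul_re, Complex.mul_im, Complex.ofReal_re, Complex.ofReal_im,
      Complex.conj_re, Complex.conj_im, hu, hv]
    ring
  have hS : 0 < s.re := by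
    rw [hs_re]
    refine Finset.sum_pos' (fun i _ => mul_nonneg (ha i).le (by positivity))
      ⟨i0, Finset.mem_univ _, ?_⟩
    exact mul_pos (ha i0) hwi0
  -- expand q
  have hq' : q = ∑ i, ∑ j, (starRingEnd ℂ) (w i) * ((L i j : ℂ) * w j) := by
    rw [hq]
    refine Finset.sum_congr rfl fun i _ => ?_
    rw [Matrix.mulVec, dotProduct, Finset.mul_sum]
    refine Finset.sum_congr rfl fun j _ => ?_
    simp [Matrix.map_apply, Complex.coe_algebraMap]
  have hLsymm : ∀ i j, L j i = L i j := fun i j => hL.1.apply i j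
  have hq_im : q.im = 0 := by
    have h1 : q.im = ∑ i, ∑ j, L i j * (u i * v j - v i * u j) := by
      rw [hq', Complex.im_sum]
      refine Finset.sum_congr rfl fun i _ => ?_
      rw [Complex.im_sum]
      refine Finset.sum_congr rfl fun j _ => ?_
      simp [Complex.mul_im, Complex.mul_re, hu, hv]
      ring
    have h2 : (∑ i, ∑ j, L i j * (u i * v j - v i * u j))
        + (∑ i, ∑ j, L i j * (u i * v j - v i * u j)) = 0 := by
      nth_rewrite 2 [Finset.sum_comm]
      simp only [← Finset.sum_add_distrib]
      refine Finset.sum_eq_zero fun i _ => Finset.sum_eq_zero fun j _ => ?_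
      rw [hLsymm j i]
      ring
    rw [h1]
    linarith [h2]
  have hq_re : 0 ≤ q.re := by
    have h1 : q.re = (∑ i, ∑ j, u i * (L i j * u j)) + (∑ i, ∑ j, v i * (L i j * v j)) := by
      rw [hq', Complex.re_sum, ← Finset.sum_add_distrib]
      refine Finset.sum_congr rfl fun i _ => ?_
      rw [Complex.re_sum, ← Finset.sum_add_distrib]
      refine Finset.sum_congr rfl fun j _ => ?_
      simp only [Complex.mul_re, Complex.mul_im, Complex.ofReal_re, Complex.ofReal_im,
        Complex.conj_re, Complex.conj_im, hu, hv]
      ring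
    have h2 := hL.dotProduct_mulVec_nonneg u
    have h3 := hL.dotProduct_mulVec_nonneg v
    simp only [dotProduct, Matrix.mulVec, star_trivial, Finset.mul_sum] at h2 h3
    rw [h1]
    exact add_nonneg h2 h3
  -- final arithmetic
  set x := μ.re with hx
  set y := μ.im with hy
  have hre : (x * x - y * y) * c.re + x * s.re + q.re = 0 := by
    have := congrArg Complex.re hsum
    simp only [Complex.add_re, Complex.mul_re, Complex.mul_im, Complex.zero_re, pow_two,
      hc_im, hs_im] at this
    linarith [this]
  have him : (x * y + y * x) * c.re + y * s.re = 0 := by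
    have := congrArg Complex.im hsum
    simp only [Complex.add_im, Complex.mul_im, Complex.mul_re, Complex.zero_im, pow_two,
      hc_im, hs_im, hq_im] at this
    linarith [this]
  by_contra hxpos
  push_neg at hxpos
  have hy0 : y = 0 := by
    have h2 : y * (2 * x * c.re + s.re) = 0 := by linarith [him]
    rcases mul_eq_zero.mp h2 with h | h
    · exact h
    · nlinarith
  rw [hy0] at hre
  nlinarith
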